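/- Sign structure of the coefficients of the Mathieu series: let m', h be real numbers with h ≠ 0, and let (k_s)_{s≥0} be a sequence of real numbers satisfying k₁ = −m'·k₀/2 and k_{s+1} = ((4s² − m')·k_s − 4h²·k_{s−1}) / ((2s+1)(2s+2)) for all s ≥ 1. Then: (a) if k_s = 0 and k_{s+1} = 0 for some s ≥ 0, then k_j = 0 for every j; (b) if the sequence is not identically zero and k_s = 0 for some s ≥ 1, then k_{s−1}·k_{s+1} < 0, i.e., the two coefficients surrounding a vanishing coefficient have opposite signs. -/
import Mathlib


open Real

/-- sign structure of the coefficients of the Mathieu series. -/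
theorem mathieu_coefficients_sign_structure
    (m' h : ℝ) (hh : h ≠ 0) (k : ℕ → ℝ)
    (hk1 : k 1 = -m' * k 0 / 2)
    (hrec : ∀ s : ℕ, 1 ≤ s →
      k (s + 1) = ((4 * (s : ℝ) ^ 2 - m') * k s - 4 * h ^ 2 * k (s - 1)) /
        ((2 * (s : ℝ) + 1) * (2 * (s : ℝ) + 2))) :
    ((∃ s : ℕ, k s = 0 ∧ k (s + 1) = 0) → ∀ j : ℕ, k j = 0) ∧
    ((¬ ∀ j : ℕ, k j = 0) →
      ∀ s : ℕ, 1 ≤ s → k s = 0 → k (s - 1) * k (s + 1) < 0) := by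
  have hd : ∀ s : ℕ, (2 * (s : ℝ) + 1) * (2 * (s : ℝ) + 2) ≠ 0 := by
    intro s
    have h1 : (0:ℝ) < 2 * (s : ℝ) + 1 := by positivity
    have h2 : (0:ℝ) < 2 * (s : ℝ) + 2 := by positivity
    positivity
  have hh2 : (4:ℝ) * h ^ 2 ≠ 0 := by positivity
  -- backward: consecutive zeros propagate down to 0
  have hback : ∀ s : ℕ, k s = 0 → k (s + 1) = 0 → k 0 = 0 ∧ k 1 = 0 := by
    intro s
    induction s with
    | zero => intro h0 h1; exact ⟨h0, h1⟩
    | succ n ih =>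
      intro h0 h1
      have hr := hrec (n + 1) (Nat.le_add_left 1 n)
      simp only [Nat.add_sub_cancel] at hr
      rw [h0, h1, mul_zero, zero_sub] at hr
      have : 4 * h ^ 2 * k n = 0 := by
        have := (div_eq_zero_iff.mp hr.symm).resolve_right (hd (n + 1))
        linarith [neg_eq_zero.mp this]
      have hkn : k n = 0 := by
        rcases mul_eq_zero.mp this with h | h
        · exact absurd h hh2
        · exact h
      exact ih hkn h0
  have hall : (∃ s : ℕ, k s = 0 ∧ k (s + 1) = 0) → ∀ j : ℕ, k j = 0 := by
    rintro ⟨s, hs0, hs1⟩ j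
    obtain ⟨h0, h1⟩ := hback s hs0 hs1
    -- forward: prove k j = 0 ∧ k (j+1) = 0 by induction
    have : ∀ j : ℕ, k j = 0 ∧ k (j + 1) = 0 := by
      intro j
      induction j with
      | zero => exact ⟨h0, h1⟩
      | succ n ih =>
        refine ⟨ih.2, ?_⟩
        have hr := hrec (n + 1) (Nat.le_add_left 1 n)
        simp only [Nat.add_sub_cancel] at hr
        rw [ih.1, ih.2] at hr
        simpa using hr
    exact (this j).1
  refine ⟨hall, ?_⟩
  intro hne s hs hks
  obtain ⟨t, ht⟩ := Nat.exists_eq_add_of_le hs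
  subst ht
  have hsm : (1 + t) - 1 = t := by omega
  have hr := hrec (1 + t) hs
  rw [hsm, hks, mul_zero, zero_sub] at hr
  have hkt : k t ≠ 0 := by
    intro h0
    exact hne (hall ⟨t, h0, by simpa [Nat.add_comm] using hks⟩)
  rw [hr]
  have hdpos : (0:ℝ) < (2 * ((1 + t : ℕ) : ℝ) + 1) * (2 * ((1 + t : ℕ) : ℝ) + 2) := by
    have : (0:ℝ) ≤ ((1 + t : ℕ) : ℝ) := Nat.cast_nonneg _
    nlinarith
  have hnum : k t * -(4 * h ^ 2 * k t) < 0 := by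
    have : (0:ℝ) < 4 * h ^ 2 * (k t * k t) :=
      mul_pos (by positivity) (mul_self_pos.mpr hkt)
    nlinarith
  rw [hsm, mul_div_assoc']
  exact div_neg_of_neg_of_pos hnum hdpos
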